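/- Let f(q) = ⟨p_t - q, ℓ_t⟩ - D_ψ(q, p_t) where ψ(p) = (1/β)Σ_i ln(1/p_i) and β·p_{t,i}·ℓ_{t,i} > -1 for all i. Then the unconstrained maximizer over q ∈ ℝ_+^K is q⋆ with coordinates q⋆_i = (1/p_{t,i} + β·ℓ_{t,i})^{-1}, and the maximum value equals D_ψ(p_t, q⋆) = (1/β)·Σ_i h(1 + β·p_{t,i}·ℓ_{t,i}) where h(x) = x - 1 - ln x; moreover if β·p_{t,i}·ℓ_{t,i} ≥ -1/2 for all i then D_ψ(p_t, q⋆) ≤ β·Σ_i p_{t,i}²·ℓ_{t,i}². -/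

import Mathlib

open Finset Real

section LogBarrierAux

private lemma lb_log_one_add_ge_quad {x : ℝ} (hx : -(1/2) ≤ x) :
    x - x^2 ≤ Real.log (1 + x) := by
  set g : ℝ → ℝ := fun y => Real.log (1 + y) - y + y ^ 2 with hg
  have hder : ∀ y : ℝ, -1 < y → HasDerivAt g ((1 + y)⁻¹ - 1 + 2 * y) y := by
    intro y hy
    have h1 : HasDerivAt (fun y : ℝ => 1 + y) 1 y := by
      simpa using (hasDerivAt_id y).const_add 1
    have h2 : HasDerivAt (fun y : ℝ => Real.log (1 + y)) ((1 + y)⁻¹ * 1) y :=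
      (Real.hasDerivAt_log (by linarith)).comp y h1
    have h3 : HasDerivAt (fun y : ℝ => y ^ 2) (2 * y) y := by
      simpa using hasDerivAt_pow 2 y
    have := (h2.sub (hasDerivAt_id y)).add h3
    rw [mul_one] at this
    exact this
  have hg0 : g 0 = 0 := by simp [hg]
  have key : 0 ≤ g x := by
    rcases le_or_gt 0 x with h | h
    · have hmono : MonotoneOn g (Set.Ici (0:ℝ)) := by
        apply monotoneOn_of_deriv_nonneg (convex_Ici 0)
        · intro y hy
          exact (hder y (by simp at hy; linarith)).continuousAt.continuousWithinAt
        · intro y hy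
          rw [interior_Ici] at hy
          exact ((hder y (by simp at hy; linarith)).differentiableAt).differentiableWithinAt
        · intro y hy
          rw [interior_Ici] at hy
          simp only [Set.mem_Ioi] at hy
          have hy1 : (0:ℝ) < 1 + y := by linarith
          rw [(hder y (by linarith)).deriv]
          have h1 : (1 + y)⁻¹ * (1 + y) = 1 := inv_mul_cancel₀ (ne_of_gt hy1)
          nlinarith [inv_pos.mpr hy1]
      have := hmono (Set.self_mem_Ici) (Set.mem_Ici.mpr h) h
      linarith [hg0 ▸ this]
    · have hanti : AntitoneOn g (Set.Icc (-(1/2):ℝ) 0) := by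
        apply antitoneOn_of_deriv_nonpos (convex_Icc _ _)
        · intro y hy
          exact (hder y (by simp [Set.mem_Icc] at hy; linarith [hy.1])).continuousAt.continuousWithinAt
        · intro y hy
          rw [interior_Icc] at hy
          exact ((hder y (by simp [Set.mem_Ioo] at hy; linarith [hy.1])).differentiableAt).differentiableWithinAt
        · intro y hy
          rw [interior_Icc] at hy
          simp only [Set.mem_Ioo] at hy
          have hy1 : (0:ℝ) < 1 + y := by linarith [hy.1]
          rw [(hder y (by linarith [hy.1])).deriv]
          have h1 : (1 + y)⁻¹ * (1 + y) = 1 := inv_mul_cancel₀ (ne_of_gt hy1)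
          nlinarith [inv_pos.mpr hy1, hy.1, hy.2]
      have := hanti (Set.mem_Icc.mpr ⟨hx, le_of_lt h⟩)
        (Set.mem_Icc.mpr ⟨by norm_num, le_refl 0⟩) (le_of_lt h)
      linarith [hg0 ▸ this]
  simp only [hg] at key
  linarith

private lemma lb_coord_max {β P Q L : ℝ} (hβ : 0 < β) (hP : 0 < P) (hQ : 0 < Q)
    (hx : -1 < β * P * L) :
    (P - Q) * L - (1/β) * (Real.log (P / Q) + Q / P - 1) ≤
    (P - (1 / P + β * L)⁻¹) * L
      - (1/β) * (Real.log (P / (1 / P + β * L)⁻¹) + (1 / P + β * L)⁻¹ / P - 1) := by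
  set S : ℝ := (1 / P + β * L)⁻¹ with hSdef
  have hsum : 1 / P + β * L = (1 + β * P * L) / P := by field_simp
  have hx1 : 0 < 1 + β * P * L := by linarith
  have hS : S = P / (1 + β * P * L) := by rw [hSdef, hsum, inv_div]
  have hSpos : 0 < S := hS ▸ div_pos hP hx1
  have hlog : Real.log (P / Q) = Real.log (P / S) - Real.log (Q / S) := by
    rw [Real.log_div (ne_of_gt hP) (ne_of_gt hQ), Real.log_div (ne_of_gt hP) (ne_of_gt hSpos),
      Real.log_div (ne_of_gt hQ) (ne_of_gt hSpos)]
    ring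
  have hc : Real.log (Q / S) ≤ Q / S - 1 := Real.log_le_sub_one_of_pos (div_pos hQ hSpos)
  have halg : (P - S) * L - (1/β) * (S / P - 1) - ((P - Q) * L - (1/β) * (Q / P - 1))
      = (1/β) * (Q / S - 1) := by
    rw [hS]; field_simp
    have hinv : (1 + P * β * L)⁻¹ * (1 + P * β * L) = 1 := inv_mul_cancel₀ (by nlinarith)
    linear_combination (-P) * hinv
  have h0 : 0 ≤ (1/β) * (Q / S - 1 - Real.log (Q / S)) :=
    mul_nonneg (by positivity) (by linarith)
  rw [hlog]
  nlinarith [h0, halg]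

private lemma lb_coord_val {β P L : ℝ} (hβ : 0 < β) (hP : 0 < P) (hx : -1 < β * P * L) :
    (P - (1 / P + β * L)⁻¹) * L
      - (1/β) * (Real.log (P / (1 / P + β * L)⁻¹) + (1 / P + β * L)⁻¹ / P - 1)
    = (1/β) * (Real.log ((1 / P + β * L)⁻¹ / P) + P / (1 / P + β * L)⁻¹ - 1) := by
  set S : ℝ := (1 / P + β * L)⁻¹ with hSdef
  have hsum : 1 / P + β * L = (1 + β * P * L) / P := by field_simp
  have hx1 : 0 < 1 + β * P * L := by linarith
  have hS : S = P / (1 + β * P * L) := by rw [hSdef, hsum, inv_div]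
  have hSpos : 0 < S := hS ▸ div_pos hP hx1
  have hlog : Real.log (P / S) = -Real.log (S / P) := by
    rw [Real.log_div (ne_of_gt hP) (ne_of_gt hSpos), Real.log_div (ne_of_gt hSpos) (ne_of_gt hP)]
    ring
  rw [hlog, hS]
  field_simp
  have hinv : (1 + P * β * L)⁻¹ * (1 + P * β * L) = 1 := inv_mul_cancel₀ (by nlinarith)
  linear_combination (-1) * hinv

private lemma lb_coord_h {β P L : ℝ} (hP : 0 < P) (hx : -1 < β * P * L) :
    Real.log ((1 / P + β * L)⁻¹ / P) + P / (1 / P + β * L)⁻¹ - 1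
    = (1 + β * P * L) - 1 - Real.log (1 + β * P * L) := by
  have hsum : 1 / P + β * L = (1 + β * P * L) / P := by field_simp
  have hx1 : 0 < 1 + β * P * L := by linarith
  have h1 : (1 / P + β * L)⁻¹ / P = (1 + β * P * L)⁻¹ := by
    rw [hsum, inv_div]
    field_simp
  have h2 : P / (1 / P + β * L)⁻¹ = 1 + β * P * L := by
    rw [hsum, inv_div]
    field_simp
  rw [h1, h2, Real.log_inv]
  ring

end LogBarrierAux

/-- Explicit maximizer of the log-barrier stability problem and the resulting
bounds. -/
theorem log_barrier_maximizer (K : ℕ) (β : ℝ) (hβ : 0 < β)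
    (p ℓ : Fin K → ℝ) (hp : ∀ i, 0 < p i)
    (hℓ : ∀ i, β * p i * ℓ i > -1)
    (D : (Fin K → ℝ) → (Fin K → ℝ) → ℝ)
    (hD : D = fun a b => (1/β) * ∑ i, (Real.log (b i / a i) + a i / b i - 1))
    (f : (Fin K → ℝ) → ℝ)
    (hf : f = fun q => (∑ i, (p i - q i) * ℓ i) - D q p)
    (qstar : Fin K → ℝ) (hqstar : qstar = fun i => (1 / p i + β * ℓ i)⁻¹) :
    (∀ q : Fin K → ℝ, (∀ i, 0 < q i) → f q ≤ f qstar)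
    ∧ f qstar = D p qstar
    ∧ D p qstar = (1/β) * ∑ i,
        ((1 + β * p i * ℓ i) - 1 - Real.log (1 + β * p i * ℓ i))
    ∧ ((∀ i, β * p i * ℓ i ≥ -(1/2)) →
        D p qstar ≤ β * ∑ i, (p i)^2 * (ℓ i)^2) := by
  subst hD hf hqstar
  simp only
  have h3 : ((1:ℝ)/β) * ∑ i, (Real.log ((fun i => (1 / p i + β * ℓ i)⁻¹) i / p i)
        + p i / (fun i => (1 / p i + β * ℓ i)⁻¹) i - 1)
      = (1/β) * ∑ i, ((1 + β * p i * ℓ i) - 1 - Real.log (1 + β * p i * ℓ i)) := by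
    congr 1
    exact Finset.sum_congr rfl fun i _ => lb_coord_h (hp i) (hℓ i)
  refine ⟨?_, ?_, h3, ?_⟩
  · intro q hq
    rw [mul_sum, mul_sum, ← Finset.sum_sub_distrib, ← Finset.sum_sub_distrib]
    exact Finset.sum_le_sum fun i _ => lb_coord_max hβ (hp i) (hq i) (hℓ i)
  · rw [mul_sum, mul_sum, ← Finset.sum_sub_distrib]
    exact Finset.sum_congr rfl fun i _ => lb_coord_val hβ (hp i) (hℓ i)
  · intro hhalf
    rw [h3]
    have hpt : ∀ i ∈ Finset.univ, (1 + β * p i * ℓ i) - 1 - Real.log (1 + β * p i * ℓ i)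
        ≤ β^2 * ((p i)^2 * (ℓ i)^2) := by
      intro i _
      have hq := lb_log_one_add_ge_quad (hhalf i)
      nlinarith [hq]
    calc (1/β) * ∑ i, ((1 + β * p i * ℓ i) - 1 - Real.log (1 + β * p i * ℓ i))
        ≤ (1/β) * ∑ i, β^2 * ((p i)^2 * (ℓ i)^2) :=
          mul_le_mul_of_nonneg_left (Finset.sum_le_sum hpt) (by positivity)
      _ = β * ∑ i, (p i)^2 * (ℓ i)^2 := by
          rw [← Finset.mul_sum]
          field_simp
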